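/- Let ℓ be a prime, n ≥ 1, g ≥ 1, and let V be a free module of rank 2g over ℤ/ℓⁿℤ equipped with an alternating nondegenerate bilinear form ⟨·,·⟩. Let M ⊆ V be a submodule that is isotropic for ⟨·,·⟩ and maximal under inclusion among isotropic submodules of V. Then there exists a submodule G ⊆ M[ℓ] such that G, viewed inside V[ℓ], is isotropic for the induced pairing ⟨·,·⟩_ℓ on V[ℓ] and maximal under inclusion among submodules of V[ℓ] isotropic for ⟨·,·⟩_ℓ. -/

import Mathlib

noncomputable section

namespace Paper

private lemma ell_pow_mul (ℓ n : ℕ) (hn : 1 ≤ n) :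
    (ℓ : ZMod (ℓ^n))^(n-1) * (ℓ : ZMod (ℓ^n)) = 0 := by
  have h : (ℓ : ZMod (ℓ^n))^(n-1) * (ℓ : ZMod (ℓ^n)) = (ℓ : ZMod (ℓ^n))^n := by
    rw [← pow_succ]; congr 1; omega
  rw [h, ← Nat.cast_pow, ZMod.natCast_self]

private lemma pi_zero_iff (ℓ n : ℕ) (hℓ : Nat.Prime ℓ) (hn : 1 ≤ n) (z : ZMod (ℓ^n)) :
    ZMod.castHom (dvd_pow_self ℓ (by omega : n ≠ 0)) (ZMod ℓ) z = 0 ↔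
      ∃ w, z = (ℓ : ZMod (ℓ^n)) * w := by
  haveI : NeZero (ℓ^n) := ⟨pow_ne_zero n hℓ.pos.ne'⟩
  have hz : ((z.val : ℕ) : ZMod (ℓ^n)) = z := ZMod.natCast_rightInverse z
  constructor
  · intro h
    rw [← hz, map_natCast] at h
    obtain ⟨k, hk⟩ := (ZMod.natCast_eq_zero_iff _ _).mp h
    exact ⟨(k : ZMod (ℓ^n)), by rw [← hz, hk]; push_cast; ring⟩
  · rintro ⟨w, rfl⟩
    rw [map_mul, map_natCast, ZMod.natCast_self, zero_mul]

private lemma key_iff (ℓ n : ℕ) (hℓ : Nat.Prime ℓ) (hn : 1 ≤ n) (z : ZMod (ℓ^n)) :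
    (ℓ : ZMod (ℓ^n))^(n-1) * z = 0 ↔
      ZMod.castHom (dvd_pow_self ℓ (by omega : n ≠ 0)) (ZMod ℓ) z = 0 := by
  haveI : NeZero (ℓ^n) := ⟨pow_ne_zero n hℓ.pos.ne'⟩
  have hz : ((z.val : ℕ) : ZMod (ℓ^n)) = z := ZMod.natCast_rightInverse z
  constructor
  · intro h
    have h1 : (((ℓ^(n-1) * z.val : ℕ)) : ZMod (ℓ^n)) = 0 := by
      push_cast
      rw [hz]; exact h
    have h2 : ℓ^n ∣ ℓ^(n-1) * z.val := (ZMod.natCast_eq_zero_iff _ _).mp h1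
    have h3 : ℓ ∣ z.val := by
      have he : ℓ^(n-1) * ℓ = ℓ^n := by rw [← pow_succ]; congr 1; omega
      exact (Nat.mul_dvd_mul_iff_left (pow_pos hℓ.pos _)).mp
        (dvd_trans (dvd_of_eq he) h2)
    rw [← hz, map_natCast]
    exact (ZMod.natCast_eq_zero_iff _ _).mpr h3
  · intro h
    obtain ⟨w, rfl⟩ := (pi_zero_iff ℓ n hℓ hn z).mp h
    rw [← mul_assoc, ell_pow_mul ℓ n hn, zero_mul]

private lemma tor_iff (ℓ n : ℕ) (hℓ : Nat.Prime ℓ) (hn : 1 ≤ n) (z : ZMod (ℓ^n)) :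
    (ℓ : ZMod (ℓ^n)) * z = 0 ↔ ∃ w, z = (ℓ : ZMod (ℓ^n))^(n-1) * w := by
  haveI : NeZero (ℓ^n) := ⟨pow_ne_zero n hℓ.pos.ne'⟩
  have hz : ((z.val : ℕ) : ZMod (ℓ^n)) = z := ZMod.natCast_rightInverse z
  constructor
  · intro h
    have h1 : (((ℓ * z.val : ℕ)) : ZMod (ℓ^n)) = 0 := by
      push_cast
      rw [hz]; exact h
    have h2 : ℓ^n ∣ ℓ * z.val := (ZMod.natCast_eq_zero_iff _ _).mp h1
    have h3 : ℓ^(n-1) ∣ z.val := by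
      have he : ℓ * ℓ^(n-1) = ℓ^n := by rw [← pow_succ']; congr 1; omega
      exact (Nat.mul_dvd_mul_iff_left hℓ.pos).mp (dvd_trans (dvd_of_eq he) h2)
    obtain ⟨k, hk⟩ := h3
    exact ⟨(k : ZMod (ℓ^n)), by rw [← hz, hk]; push_cast; ring⟩
  · rintro ⟨w, rfl⟩
    rw [← mul_assoc, mul_comm (ℓ : ZMod (ℓ^n)), ell_pow_mul ℓ n hn, zero_mul]

set_option maxHeartbeats 2000000 in
/-- maximal isotropic subgroups and ℓ-torsion.
Let `ℓ` be a prime, `n ≥ 1`, `g ≥ 1`, and `V` a free module of rank `2g` over `ℤ/ℓⁿℤ`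
equipped with an alternating nondegenerate bilinear form `B`.  If `M ⊆ V` is a maximal
isotropic submodule, then there is a submodule `G ⊆ M[ℓ]` which, viewed inside `V[ℓ]`, is
maximal isotropic for the induced pairing `⟨x, y⟩_ℓ := B x̃ y` (where `ℓ^(n-1)·x̃ = x`). -/
theorem statement6 (ℓ n g : ℕ) (hℓ : Nat.Prime ℓ) (hn : 1 ≤ n) (hg : 1 ≤ g)
    (V : Type) [AddCommGroup V] [Module (ZMod (ℓ^n)) V]
    (bV : Module.Basis (Fin (2*g)) (ZMod (ℓ^n)) V)
    (B : V →ₗ[ZMod (ℓ^n)] V →ₗ[ZMod (ℓ^n)] ZMod (ℓ^n))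
    (halt : ∀ v : V, B v v = 0)
    (hnondeg : ∀ v : V, (∀ w : V, B v w = 0) → v = 0)
    (M : Submodule (ZMod (ℓ^n)) V)
    (hMiso : ∀ x ∈ M, ∀ y ∈ M, B x y = 0)
    (hMmax : ∀ M' : Submodule (ZMod (ℓ^n)) V,
      (∀ x ∈ M', ∀ y ∈ M', B x y = 0) → M ≤ M' → M' = M) :
    ∃ G : Submodule (ZMod (ℓ^n)) V,
      -- `G ⊆ M[ℓ]`:
      G ≤ M ∧ (∀ x ∈ G, (ℓ : ZMod (ℓ^n)) • x = 0) ∧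
      -- `G` is isotropic for the induced pairing on `V[ℓ]`:
      (∀ x ∈ G, ∀ y ∈ G, ∀ x' : V, ((ℓ : ZMod (ℓ^n))^(n-1)) • x' = x → B x' y = 0) ∧
      -- `G` is maximal among submodules of `V[ℓ]` isotropic for the induced pairing:
      (∀ G' : Submodule (ZMod (ℓ^n)) V,
        (∀ x ∈ G', (ℓ : ZMod (ℓ^n)) • x = 0) →
        (∀ x ∈ G', ∀ y ∈ G', ∀ x' : V, ((ℓ : ZMod (ℓ^n))^(n-1)) • x' = x → B x' y = 0) →
        G ≤ G' → G' = G) := by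
  haveI : Fact (Nat.Prime ℓ) := ⟨hℓ⟩
  haveI : NeZero ℓ := ⟨hℓ.pos.ne'⟩
  haveI : NeZero (ℓ^n) := ⟨pow_ne_zero n hℓ.pos.ne'⟩
  have hn0 : n ≠ 0 := by omega
  set π : ZMod (ℓ^n) →+* ZMod ℓ := ZMod.castHom (dvd_pow_self ℓ hn0) (ZMod ℓ) with hπdef
  have hkey : ∀ z : ZMod (ℓ^n), (ℓ : ZMod (ℓ^n))^(n-1) * z = 0 ↔ π z = 0 :=
    fun z => key_iff ℓ n hℓ hn z
  have hπ0 : ∀ z : ZMod (ℓ^n), π z = 0 ↔ ∃ w, z = (ℓ : ZMod (ℓ^n)) * w :=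
    fun z => pi_zero_iff ℓ n hℓ hn z
  have htorz : ∀ z : ZMod (ℓ^n), (ℓ : ZMod (ℓ^n)) * z = 0 ↔
      ∃ w, z = (ℓ : ZMod (ℓ^n))^(n-1) * w := fun z => tor_iff ℓ n hℓ hn z
  have hsplit : (ℓ : ZMod (ℓ^n))^(n-1) * (ℓ : ZMod (ℓ^n)) = 0 := ell_pow_mul ℓ n hn
  have hπval : ∀ k : ZMod ℓ, π ((k.val : ℕ) : ZMod (ℓ^n)) = k := by
    intro k
    rw [map_natCast]
    exact ZMod.natCast_rightInverse k
  have hπℓ : π ((ℓ : ℕ) : ZMod (ℓ^n)) = 0 := by rw [map_natCast, ZMod.natCast_self]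
  set E := bV.equivFun with hEdef
  set u : (Fin (2*g) → ZMod ℓ) → V :=
    fun c => E.symm (fun i => (((c i).val : ℕ) : ZMod (ℓ^n))) with hudef
  set ι : (Fin (2*g) → ZMod ℓ) → V :=
    fun c => ((ℓ : ZMod (ℓ^n))^(n-1)) • u c with hιdef
  set pE : V → (Fin (2*g) → ZMod ℓ) := fun x i => π (E x i) with hpEdef
  -- basic facts about pE
  have hpEu : ∀ c, pE (u c) = c := by
    intro c
    funext i
    show π (E (E.symm _) i) = c i
    rw [LinearEquiv.apply_symm_apply]
    exact hπval (c i)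
  have hpE_add : ∀ x y : V, pE (x + y) = pE x + pE y := by
    intro x y
    funext i
    show π (E (x + y) i) = π (E x i) + π (E y i)
    rw [map_add]
    exact map_add π _ _
  have hpE_sub : ∀ x y : V, pE (x - y) = pE x - pE y := by
    intro x y
    funext i
    show π (E (x - y) i) = π (E x i) - π (E y i)
    rw [map_sub]
    exact map_sub π _ _
  have hpE_smul : ∀ (r : ZMod (ℓ^n)) (x : V), pE (r • x) = π r • pE x := by
    intro r x
    funext i
    show π (E (r • x) i) = π r * π (E x i)
    rw [map_smul]
    exact map_mul π _ _
  -- kernel of multiplication by ℓ^(n-1)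
  have hker0 : ∀ x : V, ((ℓ : ZMod (ℓ^n))^(n-1)) • x = 0 ↔ pE x = 0 := by
    intro x
    constructor
    · intro h
      funext i
      have h1 : E (((ℓ : ZMod (ℓ^n))^(n-1)) • x) i = 0 := by rw [h, map_zero]; rfl
      rw [map_smul] at h1
      exact (hkey (E x i)).mp h1
    · intro h
      have h1 : E (((ℓ : ZMod (ℓ^n))^(n-1)) • x) = 0 := by
        funext i
        rw [map_smul]
        exact (hkey (E x i)).mpr (congrFun h i)
      exact E.map_eq_zero_iff.mp h1
  -- congruence mod ℓ gives a decomposition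
  have hmodz : ∀ x y : V, pE x = pE y → ∃ v : V, x = y + (ℓ : ZMod (ℓ^n)) • v := by
    intro x y h
    have h1 : ∀ i, ∃ w, E (x - y) i = (ℓ : ZMod (ℓ^n)) * w := by
      intro i
      apply (hπ0 _).mp
      rw [map_sub]
      show π (E x i - E y i) = 0
      rw [map_sub]
      show pE x i - pE y i = 0
      rw [congrFun h i, sub_self]
    choose w hw using h1
    refine ⟨E.symm w, ?_⟩
    have h2 : x - y = (ℓ : ZMod (ℓ^n)) • E.symm w := by
      apply E.injective
      funext i
      rw [map_smul]
      show E (x - y) i = (ℓ : ZMod (ℓ^n)) * E (E.symm w) i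
      rw [LinearEquiv.apply_symm_apply]
      exact hw i
    rw [← h2]; abel
  have hvcongr : ∀ x y : V, pE x = pE y →
      ((ℓ : ZMod (ℓ^n))^(n-1)) • x = ((ℓ : ZMod (ℓ^n))^(n-1)) • y := by
    intro x y h
    have h1 : ((ℓ : ZMod (ℓ^n))^(n-1)) • (x - y) = 0 :=
      (hker0 _).mpr (by rw [hpE_sub, h, sub_self])
    rw [smul_sub] at h1
    exact sub_eq_zero.mp h1
  -- basic facts about ι
  have hι_tor : ∀ c, (ℓ : ZMod (ℓ^n)) • ι c = 0 := by
    intro c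
    show (ℓ : ZMod (ℓ^n)) • ((ℓ : ZMod (ℓ^n))^(n-1)) • u c = 0
    rw [smul_smul, mul_comm, hsplit, zero_smul]
  have hι_zero : ι 0 = 0 := by
    show ((ℓ : ZMod (ℓ^n))^(n-1)) • u 0 = 0
    have : u 0 = 0 := by
      show E.symm _ = 0
      rw [show (fun i : Fin (2*g) => ((((0 : Fin (2*g) → ZMod ℓ) i).val : ℕ) : ZMod (ℓ^n)))
        = 0 by funext i; simp]
      exact E.symm.map_zero
    rw [this, smul_zero]
  have hι_add : ∀ c d, ι (c + d) = ι c + ι d := by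
    intro c d
    show ((ℓ : ZMod (ℓ^n))^(n-1)) • u (c + d) = _
    rw [show (((ℓ : ZMod (ℓ^n))^(n-1)) • u c + ((ℓ : ZMod (ℓ^n))^(n-1)) • u d)
      = ((ℓ : ZMod (ℓ^n))^(n-1)) • (u c + u d) from (smul_add _ _ _).symm]
    exact hvcongr _ _ (by rw [hpEu, hpE_add, hpEu, hpEu])
  have hι_neg : ∀ c, ι (-c) = - ι c := by
    intro c
    have h := hι_add c (-c)
    rw [add_neg_cancel, hι_zero] at h
    exact (eq_neg_of_add_eq_zero_right h.symm)
  have hι_inj : Function.Injective ι := by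
    intro c d h
    have h1 : ((ℓ : ZMod (ℓ^n))^(n-1)) • (u c - u d) = 0 := by
      rw [smul_sub]
      exact sub_eq_zero.mpr h
    have h2 := (hker0 _).mp h1
    rw [hpE_sub, hpEu, hpEu] at h2
    exact sub_eq_zero.mp h2
  have hι_smul : ∀ (r : ZMod (ℓ^n)) (c), r • ι c = ι (π r • c) := by
    intro r c
    show r • ((ℓ : ZMod (ℓ^n))^(n-1)) • u c = ((ℓ : ZMod (ℓ^n))^(n-1)) • u (π r • c)
    rw [smul_comm]
    apply hvcongr
    rw [hpE_smul, hpEu, hpEu]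
  have htor_surj : ∀ x : V, (ℓ : ZMod (ℓ^n)) • x = 0 → ∃ c, ι c = x := by
    intro x hx
    have h1 : ∀ i, ∃ w, E x i = (ℓ : ZMod (ℓ^n))^(n-1) * w := by
      intro i
      apply (htorz _).mp
      have : E ((ℓ : ZMod (ℓ^n)) • x) i = 0 := by rw [hx, map_zero]; rfl
      rw [map_smul] at this
      exact this
    choose w hw using h1
    refine ⟨fun i => π (w i), ?_⟩
    have hc : pE (u (fun i => π (w i))) = fun i => π (w i) := hpEu _
    apply E.injective
    funext i
    show E (((ℓ : ZMod (ℓ^n))^(n-1)) • u _) i = E x i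
    rw [map_smul]
    show (ℓ : ZMod (ℓ^n))^(n-1) * E (u _) i = E x i
    have hEu : E (u (fun i => π (w i))) i = (((π (w i)).val : ℕ) : ZMod (ℓ^n)) := by
      show E (E.symm _) i = _
      rw [LinearEquiv.apply_symm_apply]
    rw [hEu, hw i]
    have : π ((((π (w i)).val : ℕ) : ZMod (ℓ^n)) - w i) = 0 := by
      rw [map_sub, hπval, sub_self]
    have h2 := (hkey _).mpr this
    rw [mul_sub] at h2
    exact sub_eq_zero.mp h2
  -- antisymmetry of B
  have hanti : ∀ x y : V, B x y = - B y x := by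
    intro x y
    have h := halt (x + y)
    simp only [map_add, LinearMap.add_apply, halt, zero_add, add_zero] at h
    exact eq_neg_of_add_eq_zero_right h
  -- congruence lemmas for B
  have hBπ_left : ∀ x y w : V, pE x = pE y → π (B x w) = π (B y w) := by
    intro x y w h
    obtain ⟨v, rfl⟩ := hmodz x y h
    rw [map_add, map_smul, LinearMap.add_apply, LinearMap.smul_apply, smul_eq_mul,
      map_add, map_mul, hπℓ, zero_mul, add_zero]
  have hBπ_right : ∀ w x y : V, pE x = pE y → π (B w x) = π (B w y) := by
    intro w x y h
    obtain ⟨v, rfl⟩ := hmodz x y h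
    rw [map_add, map_smul, smul_eq_mul, map_add, map_mul, hπℓ, zero_mul, add_zero]
  -- the induced bilinear form on (Fin (2*g) → ZMod ℓ)
  set Bf : LinearMap.BilinForm (ZMod ℓ) (Fin (2*g) → ZMod ℓ) :=
    LinearMap.mk₂ (ZMod ℓ) (fun c d => π (B (u c) (u d)))
      (by
        intro c c' d
        show π (B (u (c + c')) (u d)) = π (B (u c) (u d)) + π (B (u c') (u d))
        rw [hBπ_left (u (c + c')) (u c + u c') (u d)
          (by rw [hpEu, hpE_add, hpEu, hpEu]), map_add, LinearMap.add_apply, map_add])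
      (by
        intro k c d
        show π (B (u (k • c)) (u d)) = k • π (B (u c) (u d))
        rw [hBπ_left (u (k • c)) ((((k.val : ℕ)) : ZMod (ℓ^n)) • u c) (u d)
          (by rw [hpEu, hpE_smul, hpEu, hπval]), map_smul, LinearMap.smul_apply,
          smul_eq_mul, map_mul, hπval, smul_eq_mul])
      (by
        intro c d d'
        show π (B (u c) (u (d + d'))) = π (B (u c) (u d)) + π (B (u c) (u d'))
        rw [hBπ_right (u c) (u (d + d')) (u d + u d')
          (by rw [hpEu, hpE_add, hpEu, hpEu]), map_add, map_add])
      (by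
        intro k c d
        show π (B (u c) (u (k • d))) = k • π (B (u c) (u d))
        rw [hBπ_right (u c) (u (k • d)) ((((k.val : ℕ)) : ZMod (ℓ^n)) • u d)
          (by rw [hpEu, hpE_smul, hpEu, hπval]), map_smul, smul_eq_mul, map_mul,
          hπval, smul_eq_mul])
    with hBfdef
  have hBf_apply : ∀ c d, Bf c d = π (B (u c) (u d)) := by
    intro c d; rfl
  have hBalt : Bf.IsAlt := by
    intro c
    rw [hBf_apply, halt, map_zero]
  have hrefl : Bf.IsRefl := hBalt.isRefl
  have hBanti : ∀ c d, Bf c d = - Bf d c := by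
    intro c d
    rw [hBf_apply, hBf_apply, hanti (u c) (u d), map_neg]
  -- relating Bf to B on torsion points
  have hB_iota : ∀ c d, B (u c) (ι d) = 0 ↔ Bf c d = 0 := by
    intro c d
    show B (u c) (((ℓ : ZMod (ℓ^n))^(n-1)) • u d) = 0 ↔ _
    rw [map_smul, smul_eq_mul, hBf_apply]
    exact hkey _
  have hB_lift : ∀ c d (x' : V), ((ℓ : ZMod (ℓ^n))^(n-1)) • x' = ι c →
      B x' (ι d) = B (u c) (ι d) := by
    intro c d x' hx'
    have h0 : pE x' = pE (u c) := by
      have h1 : ((ℓ : ZMod (ℓ^n))^(n-1)) • (x' - u c) = 0 := by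
        rw [smul_sub, hx']
        show ι c - ι c = 0
        rw [sub_self]
      have h2 := (hker0 _).mp h1
      rw [hpE_sub] at h2
      exact sub_eq_zero.mp h2
    obtain ⟨v, rfl⟩ := hmodz x' (u c) h0
    have h5 : B ((ℓ : ZMod (ℓ^n)) • v) (ι d) = 0 := by
      show B ((ℓ : ZMod (ℓ^n)) • v) (((ℓ : ZMod (ℓ^n))^(n-1)) • u d) = 0
      simp only [map_smul, LinearMap.smul_apply, smul_smul,
        mul_comm (ℓ : ZMod (ℓ^n)) ((ℓ : ZMod (ℓ^n))^(n-1)), hsplit, zero_smul]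
    rw [map_add, LinearMap.add_apply, h5, add_zero]
  -- nondegeneracy of Bf
  have hBnd : Bf.Nondegenerate := by
    refine hrefl.nondegenerate_iff_separatingLeft.mpr ?_
    intro c hc
    have h1 : ι c = 0 := by
      apply hnondeg
      intro w
      obtain ⟨v, hw⟩ := hmodz w (u (pE w)) (by rw [hpEu])
      rw [hw, map_add]
      have h2 : B (ι c) (u (pE w)) = 0 := by
        show B (((ℓ : ZMod (ℓ^n))^(n-1)) • u c) (u (pE w)) = 0
        rw [map_smul, LinearMap.smul_apply, smul_eq_mul]
        refine (hkey _).mpr ?_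
        rw [← hBf_apply]
        exact hc (pE w)
      have h3 : B (ι c) ((ℓ : ZMod (ℓ^n)) • v) = 0 := by
        show B (((ℓ : ZMod (ℓ^n))^(n-1)) • u c) ((ℓ : ZMod (ℓ^n)) • v) = 0
        simp only [map_smul, LinearMap.smul_apply, smul_smul,
          mul_comm (ℓ : ZMod (ℓ^n)) ((ℓ : ZMod (ℓ^n))^(n-1)), hsplit, zero_smul]
      rw [h2, h3, add_zero]
    have : ι c = ι 0 := by rw [h1, hι_zero]
    exact hι_inj this
  -- the submodule W = pullback of M under ι
  set WA : AddSubgroup (Fin (2*g) → ZMod ℓ) :=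
    { carrier := {c | ι c ∈ M}
      add_mem' := fun {a b} ha hb => by
        show ι (a + b) ∈ M
        rw [hι_add]
        exact M.add_mem ha hb
      zero_mem' := by
        show ι 0 ∈ M
        rw [hι_zero]; exact M.zero_mem
      neg_mem' := fun {a} ha => by
        show ι (-a) ∈ M
        rw [hι_neg]
        exact M.neg_mem ha } with hWAdef
  set W : Submodule (ZMod ℓ) (Fin (2*g) → ZMod ℓ) := AddSubgroup.toZModSubmodule ℓ WA
    with hWdef
  have hWmem : ∀ c, c ∈ W ↔ ι c ∈ M := fun c => Iff.rfl
  -- M equals its own orthogonal complement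
  have hMperp : ∀ v : V, (∀ m ∈ M, B v m = 0) → v ∈ M := by
    intro v hv
    have hiso : ∀ x ∈ M ⊔ Submodule.span (ZMod (ℓ^n)) {v},
        ∀ y ∈ M ⊔ Submodule.span (ZMod (ℓ^n)) {v}, B x y = 0 := by
      intro x hx y hy
      rw [Submodule.mem_sup] at hx hy
      obtain ⟨m1, hm1, z1, hz1, rfl⟩ := hx
      obtain ⟨m2, hm2, z2, hz2, rfl⟩ := hy
      rw [Submodule.mem_span_singleton] at hz1 hz2
      obtain ⟨a, rfl⟩ := hz1
      obtain ⟨b, rfl⟩ := hz2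
      have e1 : B m1 m2 = 0 := hMiso m1 hm1 m2 hm2
      have e2 : B v m2 = 0 := hv m2 hm2
      have e3 : B m1 v = 0 := by rw [hanti, hv m1 hm1, neg_zero]
      have e4 : B v v = 0 := halt v
      simp only [map_add, map_smul, LinearMap.add_apply, LinearMap.smul_apply,
        smul_eq_mul]
      rw [e1, e2, e3, e4]
      ring
    have heq := hMmax _ hiso le_sup_left
    rw [← heq]
    exact Submodule.mem_sup_right (Submodule.mem_span_singleton_self v)
  -- W is coisotropic
  have hWco : Bf.orthogonal W ≤ W := by
    intro c hc
    rw [hWmem]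
    apply hMperp
    intro m hm
    have hBι : B (ι c) m = (ℓ : ZMod (ℓ^n))^(n-1) * B (u c) m := by
      show B (((ℓ : ZMod (ℓ^n))^(n-1)) • u c) m = _
      rw [map_smul, LinearMap.smul_apply, smul_eq_mul]
    rw [hBι]
    obtain ⟨d, hd⟩ := htor_surj (((ℓ : ZMod (ℓ^n))^(n-1)) • m)
      (by rw [smul_smul, mul_comm, hsplit, zero_smul])
    have hdW : d ∈ W := by
      rw [hWmem, hd]
      exact M.smul_mem _ hm
    have h1 : Bf d c = 0 := hc d hdW
    have h2 : Bf c d = 0 := by rw [hBanti, h1, neg_zero]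
    have h3 : B (u c) (ι d) = 0 := (hB_iota c d).mpr h2
    rw [hd] at h3
    rw [map_smul, smul_eq_mul] at h3
    exact h3
  -- pick a maximal isotropic subspace inside W
  haveI : Finite (Submodule (ZMod ℓ) (Fin (2*g) → ZMod ℓ)) :=
    Finite.of_injective (fun s => (s : Set (Fin (2*g) → ZMod ℓ))) SetLike.coe_injective
  set S : Set (Submodule (ZMod ℓ) (Fin (2*g) → ZMod ℓ)) :=
    {Gs | Gs ≤ W ∧ ∀ c ∈ Gs, ∀ d ∈ Gs, Bf c d = 0} with hSdef
  have hSne : S.Nonempty := ⟨⊥, bot_le, by simp⟩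
  obtain ⟨G₀, hG₀S, hG₀max⟩ : ∃ G₀ ∈ S, ∀ a' ∈ S, id G₀ ≤ id a' → id G₀ = id a' := by
    obtain ⟨G₀, hG₀S, hmax⟩ := Set.Finite.exists_maximalFor id S (Set.toFinite S) hSne
    exact ⟨G₀, hG₀S, fun a' ha' hle => le_antisymm hle (hmax ha' hle)⟩
  simp only [id] at hG₀max
  -- maximality within W
  have hsup : ∀ z, z ∈ W → (∀ d ∈ G₀, Bf d z = 0) → z ∈ G₀ := by
    intro z hzW hz
    have hzG : ∀ d ∈ G₀, Bf z d = 0 := fun d hd => hrefl d z (hz d hd)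
    have hGS : (G₀ ⊔ Submodule.span (ZMod ℓ) {z}) ∈ S := by
      constructor
      · exact sup_le hG₀S.1 (by rwa [Submodule.span_le, Set.singleton_subset_iff])
      · intro x hx y hy
        rw [Submodule.mem_sup] at hx hy
        obtain ⟨a, haG, z1, hz1, rfl⟩ := hx
        obtain ⟨b, hbG, z2, hz2, rfl⟩ := hy
        rw [Submodule.mem_span_singleton] at hz1 hz2
        obtain ⟨r, rfl⟩ := hz1
        obtain ⟨s, rfl⟩ := hz2
        simp only [map_add, map_smul, LinearMap.add_apply, LinearMap.smul_apply,
          smul_eq_mul]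
        rw [hG₀S.2 a haG b hbG, hz a haG, hzG b hbG, hBalt z]
        ring
    have := hG₀max _ hGS le_sup_left
    rw [this]
    exact Submodule.mem_sup_right (Submodule.mem_span_singleton_self z)
  have hWperp_le : Bf.orthogonal W ≤ G₀ := by
    intro z hz
    exact hsup z (hWco hz) (fun d hd => hz d (hG₀S.1 hd))
  -- G₀ equals its own orthogonal
  have hOG : Bf.orthogonal G₀ = G₀ := by
    apply le_antisymm
    · intro z hz
      have hzW : z ∈ W := by
        have h1 : Bf.orthogonal G₀ ≤ Bf.orthogonal (Bf.orthogonal W) :=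
          LinearMap.BilinForm.orthogonal_le hWperp_le
        rw [LinearMap.BilinForm.orthogonal_orthogonal hBnd hrefl] at h1
        exact h1 hz
      exact hsup z hzW (fun d hd => hz d hd)
    · intro z hzG
      intro d hd
      exact hG₀S.2 d hd z hzG
  -- the image of G₀ in V
  set GA : AddSubgroup V :=
    { carrier := ι '' (G₀ : Set (Fin (2*g) → ZMod ℓ))
      add_mem' := fun {a b} ha hb => by
        obtain ⟨c1, hc1, rfl⟩ := ha
        obtain ⟨c2, hc2, rfl⟩ := hb
        exact ⟨c1 + c2, G₀.add_mem hc1 hc2, (hι_add c1 c2)⟩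
      zero_mem' := ⟨0, G₀.zero_mem, hι_zero⟩
      neg_mem' := fun {a} ha => by
        obtain ⟨c, hc, rfl⟩ := ha
        exact ⟨-c, G₀.neg_mem hc, hι_neg c⟩ } with hGAdef
  refine ⟨AddSubgroup.toZModSubmodule (ℓ^n) GA, ?_, ?_, ?_, ?_⟩
  · -- G ≤ M
    rintro x ⟨c, hc, rfl⟩
    exact (hWmem c).mp (hG₀S.1 hc)
  · -- torsion
    rintro x ⟨c, hc, rfl⟩
    exact hι_tor c
  · -- isotropic
    rintro x ⟨c, hc, rfl⟩ y ⟨d, hd, rfl⟩ x' hx'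
    rw [hB_lift c d x' hx']
    exact (hB_iota c d).mpr (hG₀S.2 c hc d hd)
  · -- maximality
    intro G' htor' hiso' hle
    apply le_antisymm ?_ hle
    intro x hx
    obtain ⟨c, hc⟩ := htor_surj x (htor' x hx)
    have hcG' : ι c ∈ G' := by rw [hc]; exact hx
    have hcG₀ : c ∈ G₀ := by
      rw [← hOG]
      intro d hd
      have hdG' : ι d ∈ G' := hle ⟨d, hd, rfl⟩
      exact (hB_iota d c).mp (hiso' (ι d) hdG' (ι c) hcG' (u d) rfl)
    exact ⟨c, hcG₀, hc⟩

end Paper
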